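/- Let ρ = a|00⟩⟨00| + b|01⟩⟨01| + c|10⟩⟨10| + d|11⟩⟨11| with 0 ≤ a,b,c,d ≤ 1, a+b+c+d = 1, b,c > 0, and let σ = |s⟩⟨s| with |s⟩ = (√b|01⟩ + √c|10⟩)/√(b+c). Then for every t > t₀ = (b+c)√(ad/(bc)), the state ρ' = (ρ + tσ)/(1+t) is entangled, and t₀·C(σ) = 2√(ad). -/

import Mathlib

open scoped ComplexOrder

noncomputable section

/-- σ_y ⊗ σ_y as a 4×4 matrix, in the product basis |00⟩,|01⟩,|10⟩,|11⟩. -/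
def sigmaYY : Matrix (Fin 4) (Fin 4) ℂ :=
  !![0, 0, 0, -1; 0, 0, 1, 0; 0, 1, 0, 0; -1, 0, 0, 0]

/-- The spin-flipped state ρ̃ = (σ_y⊗σ_y) ρ* (σ_y⊗σ_y). -/
def spinFlip (ρ : Matrix (Fin 4) (Fin 4) ℂ) : Matrix (Fin 4) (Fin 4) ℂ :=
  sigmaYY * ρ.map (starRingEnd ℂ) * sigmaYY

/-- The square roots of the eigenvalues (with multiplicity) of ρρ̃,
sorted in increasing order; so `λ₁ = (lamList ρ).getD 3 0` is the largest, etc. -/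
def lamList (ρ : Matrix (Fin 4) (Fin 4) ℂ) : List ℝ :=
  Multiset.sort
    (((ρ * spinFlip ρ).charpoly.roots).map (fun z => Real.sqrt z.re)) (· ≤ ·)

/-- Λ(ρ) = λ₁ − λ₂ − λ₃ − λ₄. -/
def Lam (ρ : Matrix (Fin 4) (Fin 4) ℂ) : ℝ :=
  (lamList ρ).getD 3 0 - (lamList ρ).getD 2 0 - (lamList ρ).getD 1 0 - (lamList ρ).getD 0 0

/-- The concurrence C(ρ) = max{Λ(ρ), 0}. -/
def Conc (ρ : Matrix (Fin 4) (Fin 4) ℂ) : ℝ := max (Lam ρ) 0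

/-- A quantum state: positive semidefinite with unit trace. -/
def IsQState {n : Type*} [Fintype n] [DecidableEq n] (ρ : Matrix n n ℂ) : Prop :=
  ρ.PosSemidef ∧ ρ.trace = 1

/-- Kronecker product of two 2×2 matrices as a 4×4 matrix, in the basis
|00⟩,|01⟩,|10⟩,|11⟩ (index 2i+j for (i,j)). -/
def kron2 (A B : Matrix (Fin 2) (Fin 2) ℂ) : Matrix (Fin 4) (Fin 4) ℂ :=
  Matrix.of fun i j =>
    A ⟨i.val / 2, by omega⟩ ⟨j.val / 2, by omega⟩ *
      B ⟨i.val % 2, by omega⟩ ⟨j.val % 2, by omega⟩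

/-- Separability of a two-qubit state. -/
def IsSep2 (ρ : Matrix (Fin 4) (Fin 4) ℂ) : Prop :=
  ∃ (m : ℕ) (p : Fin m → ℝ) (A B : Fin m → Matrix (Fin 2) (Fin 2) ℂ),
    (∀ i, 0 ≤ p i) ∧ (∑ i, p i = 1) ∧
    (∀ i, IsQState (A i)) ∧ (∀ i, IsQState (B i)) ∧
    ρ = ∑ i, p i • kron2 (A i) (B i)

/-- An entangled two-qubit state: a state which is not separable. -/
def IsEnt2 (ρ : Matrix (Fin 4) (Fin 4) ℂ) : Prop := IsQState ρ ∧ ¬ IsSep2 ρ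

/-- The negative entanglement measure (NEM). -/
def NEM2 (ρ : Matrix (Fin 4) (Fin 4) ℂ) : ℝ :=
  - sInf { x : ℝ | ∃ (t : ℝ) (σ : Matrix (Fin 4) (Fin 4) ℂ),
      0 < t ∧ IsEnt2 σ ∧ 0 < Conc ((1 / (1 + t)) • (ρ + t • σ)) ∧ x = t * Conc σ }

/-- The rank-one projector |ψ⟩⟨ψ| associated to a vector ψ. -/
def outer {n : Type*} [Fintype n] (ψ : n → ℂ) : Matrix n n ℂ :=
  Matrix.of fun i j => ψ i * (starRingEnd ℂ) (ψ j)

/-- σ = |s⟩⟨s| with |s⟩ = (√b|01⟩ + √c|10⟩)/√(b+c). -/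
def sigmaBC (b c : ℝ) : Matrix (Fin 4) (Fin 4) ℂ :=
  outer ![0, (Real.sqrt b / Real.sqrt (b + c) : ℂ), (Real.sqrt c / Real.sqrt (b + c) : ℂ), 0]


open Polynomial in
lemma my_charpoly_special (u v w : ℂ) :
    (!![0,0,0,0; 0,u,v,0; 0,w,u,0; 0,0,0,0] : Matrix (Fin 4) (Fin 4) ℂ).charpoly =
      X^2 * ((X - C u)^2 - C (v*w)) := by
  have h : (!![0,0,0,0; 0,u,v,0; 0,w,u,0; 0,0,0,0] : Matrix (Fin 4) (Fin 4) ℂ).charmatrix =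
      !![(X:ℂ[X]),0,0,0; 0, X - C u, -C v, 0; 0, -C w, X - C u, 0; 0,0,0,X] := by
    ext i j
    fin_cases i <;> fin_cases j <;>
      simp [Matrix.charmatrix_apply, Matrix.diagonal, Matrix.vecHead, Matrix.vecTail]
  rw [Matrix.charpoly, h]
  simp [Matrix.det_succ_row_zero, Fin.sum_univ_succ, Matrix.vecHead, Matrix.vecTail,
    Fin.succAbove, Matrix.submatrix]
  ring

lemma my_sig_eq (b c : ℝ) :
    sigmaBC b c = !![0,0,0,0;
      0, ((Real.sqrt b / Real.sqrt (b+c) : ℝ):ℂ)*((Real.sqrt b / Real.sqrt (b+c) : ℝ):ℂ),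
         ((Real.sqrt b / Real.sqrt (b+c) : ℝ):ℂ)*((Real.sqrt c / Real.sqrt (b+c) : ℝ):ℂ), 0;
      0, ((Real.sqrt c / Real.sqrt (b+c) : ℝ):ℂ)*((Real.sqrt b / Real.sqrt (b+c) : ℝ):ℂ),
         ((Real.sqrt c / Real.sqrt (b+c) : ℝ):ℂ)*((Real.sqrt c / Real.sqrt (b+c) : ℝ):ℂ), 0;
      0,0,0,0] := by
  ext i j
  fin_cases i <;> fin_cases j <;>
    simp [sigmaBC, outer, map_div₀, Complex.conj_ofReal, Matrix.vecHead, Matrix.vecTail]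

lemma my_prod_eq (P Q : ℂ) (hP : (starRingEnd ℂ) P = P) (hQ : (starRingEnd ℂ) Q = Q) :
    (!![0,0,0,0; 0,P*P,P*Q,0; 0,Q*P,Q*Q,0; 0,0,0,0] : Matrix (Fin 4) (Fin 4) ℂ) *
      spinFlip !![0,0,0,0; 0,P*P,P*Q,0; 0,Q*P,Q*Q,0; 0,0,0,0] =
    !![0,0,0,0; 0, 2*(P*Q)*(P*Q), 2*(P*P)*(P*Q), 0; 0, 2*(Q*Q)*(P*Q), 2*(P*Q)*(P*Q), 0; 0,0,0,0] := by
  ext i j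
  fin_cases i <;> fin_cases j <;>
    simp [spinFlip, sigmaYY, Matrix.mul_apply, Matrix.map_apply, Fin.sum_univ_four, hP, hQ,
      Matrix.vecHead, Matrix.vecTail, -Matrix.cons_mul] <;> ring

open Polynomial in
lemma my_conc_of_charpoly (σ : Matrix (Fin 4) (Fin 4) ℂ) (e : ℝ)
    (h : (σ * spinFlip σ).charpoly = X^3 * (X - C ((e:ℝ):ℂ))) :
    Conc σ = Real.sqrt e := by
  have hne : (X^3 * (X - C ((e:ℝ):ℂ)) : ℂ[X]) ≠ 0 :=
    mul_ne_zero (pow_ne_zero _ X_ne_zero) (X_sub_C_ne_zero _)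
  have hroots : (σ * spinFlip σ).charpoly.roots = {0, 0, 0, ((e:ℝ):ℂ)} := by
    rw [h, Polynomial.roots_mul hne, Polynomial.roots_pow, Polynomial.roots_X,
      Polynomial.roots_X_sub_C]
    rfl
  have hmap : ((σ * spinFlip σ).charpoly.roots).map (fun z => Real.sqrt z.re)
      = ↑([0, 0, 0, Real.sqrt e] : List ℝ) := by
    rw [hroots]
    simp [Multiset.insert_eq_cons]
    rfl
  have hsort : lamList σ = [0, 0, 0, Real.sqrt e] := by
    unfold lamList
    rw [hmap]
    refine List.Perm.eq_of_pairwise' (r := (· ≤ · : ℝ → ℝ → Prop))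
      (Multiset.pairwise_sort _ _) ?_
      (Multiset.coe_eq_coe.mp (Multiset.sort_eq (α := ℝ) ↑([0, 0, 0, Real.sqrt e] : List ℝ) (· ≤ ·)))
    simp [Real.sqrt_nonneg]
  unfold Conc Lam
  rw [hsort]
  simp [Real.sqrt_nonneg]

open Polynomial in
lemma my_conc_sigmaBC (b c : ℝ) (hb : 0 < b) (hc : 0 < c) :
    Conc (sigmaBC b c) = 2 * (Real.sqrt b * Real.sqrt c) / (b + c) := by
  set p : ℝ := Real.sqrt b / Real.sqrt (b+c) with hpdef
  set q : ℝ := Real.sqrt c / Real.sqrt (b+c) with hqdef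
  have hbc : (0:ℝ) < b + c := by linarith
  have h2 : sigmaBC b c * spinFlip (sigmaBC b c) =
      !![0,0,0,0; 0, 2*((p:ℂ)*q)*((p:ℂ)*q), 2*((p:ℂ)*p)*((p:ℂ)*q), 0;
         0, 2*((q:ℂ)*q)*((p:ℂ)*q), 2*((p:ℂ)*q)*((p:ℂ)*q), 0; 0,0,0,0] := by
    rw [my_sig_eq b c]
    exact my_prod_eq _ _ (Complex.conj_ofReal p) (Complex.conj_ofReal q)
  have h3 : (sigmaBC b c * spinFlip (sigmaBC b c)).charpoly
      = X^3 * (X - C ((4*p^2*q^2 : ℝ):ℂ)) := by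
    rw [h2, my_charpoly_special]
    have he : ((4*p^2*q^2 : ℝ):ℂ) = 2 * (2*((p:ℂ)*q)*((p:ℂ)*q)) := by push_cast; ring
    have hvw : (2*((p:ℂ)*p)*((p:ℂ)*q)) * (2*((q:ℂ)*q)*((p:ℂ)*q))
        = (2*((p:ℂ)*q)*((p:ℂ)*q))^2 := by ring
    rw [he, hvw]
    generalize (2*((p:ℂ)*q)*((p:ℂ)*q)) = u
    simp only [map_pow, map_mul, map_ofNat]
    ring
  have h4 := my_conc_of_charpoly _ (4*p^2*q^2) h3
  rw [h4, show (4:ℝ)*p^2*q^2 = (2*p*q)^2 by ring,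
    Real.sqrt_sq (by positivity)]
  rw [hpdef, hqdef, mul_assoc, div_mul_div_comm, Real.mul_self_sqrt hbc.le]
  ring

open Matrix in
lemma my_psd2_bound (M : Matrix (Fin 2) (Fin 2) ℂ) (h : M.PosSemidef) :
    ‖M 0 1‖ ^ 2 ≤ (M 0 0).re * (M 1 1).re := by
  set r : ℝ := ‖M 0 1‖ with hrdef
  have hr0 : 0 ≤ r := norm_nonneg _
  set β : ℂ := M 0 1 with hβdef
  have h00 : M 0 0 = ((M 0 0).re : ℂ) := by
    have := congrFun (congrFun h.1 0) 0
    rw [Matrix.conjTranspose_apply] at this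
    exact (Complex.conj_eq_iff_re.mp this).symm ▸ rfl
  have h11 : M 1 1 = ((M 1 1).re : ℂ) := by
    have := congrFun (congrFun h.1 1) 1
    rw [Matrix.conjTranspose_apply] at this
    exact (Complex.conj_eq_iff_re.mp this).symm ▸ rfl
  have h10 : M 1 0 = (starRingEnd ℂ) β := by
    have := congrFun (congrFun h.1 1) 0
    rw [Matrix.conjTranspose_apply] at this
    exact this.symm
  have hββ : (starRingEnd ℂ) β * β = ((r : ℝ) : ℂ)^2 := by
    rw [mul_comm, Complex.mul_conj, hrdef]
    norm_cast
    rw [Complex.sq_norm]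
  -- diagonal entries nonneg
  have hdiag : ∀ i, 0 ≤ (M i i).re := by
    intro i
    have := h.dotProduct_mulVec_nonneg (Pi.single i 1)
    have h2 := (Complex.le_def.mp this).1
    simpa [dotProduct, Matrix.mulVec, Fin.sum_univ_two, Pi.single_apply] using h2
  have quad : ∀ t : ℝ, 0 ≤ (r^2*(M 0 0).re) * (t*t) + (2*(r^3))*t + (r^2*(M 1 1).re) := by
    intro t
    set x : Fin 2 → ℂ := ![(t:ℂ) * β, (r:ℂ)] with hxdef
    have hz := h.dotProduct_mulVec_nonneg x
    have key : dotProduct (star x) (M.mulVec x) =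
        (((r^2*(M 0 0).re) * (t*t) + (2*(r^3))*t + (r^2*(M 1 1).re) : ℝ) : ℂ) := by
      simp only [dotProduct, Matrix.mulVec, Fin.sum_univ_two, Pi.star_apply,
        RCLike.star_def, hxdef, Matrix.cons_val_zero, Matrix.cons_val_one, Matrix.head_cons]
      rw [h10, h00, h11, ← hβdef]
      push_cast
      simp only [_root_.map_mul, Complex.conj_ofReal, Complex.ofReal_re, Complex.ofReal_pow]
      linear_combination ((t:ℂ)*t*((M 0 0).re) + 2*t*r) * hββ
    rw [key] at hz
    exact Complex.zero_le_real.mp hz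
  have hd := discrim_le_zero quad
  unfold discrim at hd
  rcases eq_or_lt_of_le hr0 with hr | hr
  · rw [← hr]
    simpa using mul_nonneg (hdiag 0) (hdiag 1)
  · nlinarith [pow_pos hr 4, pow_pos hr 2]

open Matrix in
lemma my_diag_real {n : Type*} [Fintype n] [DecidableEq n] (N : Matrix n n ℂ)
    (h : N.IsHermitian) (i : n) : N i i = ((N i i).re : ℂ) := by
  have := congrFun (congrFun h i) i
  rw [Matrix.conjTranspose_apply] at this
  exact ((Complex.conj_eq_iff_re.mp this).symm ▸ rfl)

open Matrix in
lemma my_psd_diag_nonneg {n : Type*} [Fintype n] [DecidableEq n] (N : Matrix n n ℂ)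
    (h : N.PosSemidef) (i : n) : 0 ≤ (N i i).re := by
  have h2 := (Complex.le_def.mp (h.dotProduct_mulVec_nonneg (Pi.single i 1))).1
  simpa [dotProduct, Matrix.mulVec, Pi.single_apply] using h2




open Matrix in
lemma my_sep_bound (ρ : Matrix (Fin 4) (Fin 4) ℂ) (hsep : IsSep2 ρ) :
    ‖ρ 1 2‖ ^ 2 ≤ (ρ 0 0).re * (ρ 3 3).re := by
  obtain ⟨m, p, A, B, hp, _, hA, hB, hρ⟩ := hsep
  set f : Fin m → ℝ := fun i => Real.sqrt (p i * ((A i 0 0).re * (B i 0 0).re)) with hf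
  set g : Fin m → ℝ := fun i => Real.sqrt (p i * ((A i 1 1).re * (B i 1 1).re)) with hg
  have ha00 : ∀ i, 0 ≤ (A i 0 0).re := fun i => my_psd_diag_nonneg _ (hA i).1 0
  have ha11 : ∀ i, 0 ≤ (A i 1 1).re := fun i => my_psd_diag_nonneg _ (hA i).1 1
  have hb00 : ∀ i, 0 ≤ (B i 0 0).re := fun i => my_psd_diag_nonneg _ (hB i).1 0
  have hb11 : ∀ i, 0 ≤ (B i 1 1).re := fun i => my_psd_diag_nonneg _ (hB i).1 1
  -- entries
  have e12 : ρ 1 2 = ∑ i, (p i : ℂ) * (A i 0 1 * B i 1 0) := by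
    rw [hρ]
    simp [Matrix.sum_apply, Complex.real_smul]
    rfl
  have e00 : (ρ 0 0).re = ∑ i, p i * ((A i 0 0).re * (B i 0 0).re) := by
    rw [hρ]
    simp only [Matrix.sum_apply, Matrix.smul_apply]
    rw [Complex.re_sum]
    refine Finset.sum_congr rfl fun i _ => ?_
    have : kron2 (A i) (B i) 0 0 = A i 0 0 * B i 0 0 := rfl
    rw [this, my_diag_real _ (hA i).1.1 0, my_diag_real _ (hB i).1.1 0, Complex.real_smul]
    push_cast
    simp
  have e33 : (ρ 3 3).re = ∑ i, p i * ((A i 1 1).re * (B i 1 1).re) := by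
    rw [hρ]
    simp only [Matrix.sum_apply, Matrix.smul_apply]
    rw [Complex.re_sum]
    refine Finset.sum_congr rfl fun i _ => ?_
    have : kron2 (A i) (B i) 3 3 = A i 1 1 * B i 1 1 := rfl
    rw [this, my_diag_real _ (hA i).1.1 1, my_diag_real _ (hB i).1.1 1, Complex.real_smul]
    push_cast
    simp
  -- step 1
  have step1 : ‖ρ 1 2‖ ≤ ∑ i, f i * g i := by
    rw [e12]
    refine (norm_sum_le _ _).trans (Finset.sum_le_sum fun i _ => ?_)
    rw [norm_mul, norm_mul, Complex.norm_real, Real.norm_eq_abs, abs_of_nonneg (hp i)]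
    -- p i * (|A01| * |B10|) ≤ f i * g i
    have hBh : B i 1 0 = (starRingEnd ℂ) (B i 0 1) := by
      have := congrFun (congrFun (hB i).1.1 1) 0
      rw [Matrix.conjTranspose_apply] at this
      exact this.symm
    have hAb : ‖A i 0 1‖ ≤ Real.sqrt ((A i 0 0).re * (A i 1 1).re) :=
      (Real.le_sqrt (norm_nonneg _) (mul_nonneg (ha00 i) (ha11 i))).mpr
        (my_psd2_bound _ (hA i).1)
    have hBb : ‖B i 1 0‖ ≤ Real.sqrt ((B i 0 0).re * (B i 1 1).re) := by
      rw [hBh, Complex.norm_conj]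
      exact (Real.le_sqrt (norm_nonneg _) (mul_nonneg (hb00 i) (hb11 i))).mpr
        (my_psd2_bound _ (hB i).1)
    have hfg : f i * g i =
        p i * (Real.sqrt ((A i 0 0).re * (A i 1 1).re) * Real.sqrt ((B i 0 0).re * (B i 1 1).re)) := by
      rw [hf, hg]
      rw [← Real.sqrt_mul (mul_nonneg (hp i) (mul_nonneg (ha00 i) (hb00 i))),
        ← Real.sqrt_mul (mul_nonneg (ha00 i) (ha11 i)),
        show p i * ((A i 0 0).re * (B i 0 0).re) * (p i * ((A i 1 1).re * (B i 1 1).re))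
          = (p i)^2 * ((A i 0 0).re * (A i 1 1).re * ((B i 0 0).re * (B i 1 1).re)) by ring,
        Real.sqrt_mul (sq_nonneg _), Real.sqrt_sq (hp i)]
    rw [hfg]
    exact mul_le_mul_of_nonneg_left
      (mul_le_mul hAb hBb (norm_nonneg _) (Real.sqrt_nonneg _)) (hp i)
  -- step 2
  have hfg0 : 0 ≤ ∑ i, f i * g i :=
    Finset.sum_nonneg fun i _ => mul_nonneg (Real.sqrt_nonneg _) (Real.sqrt_nonneg _)
  have step2 : (∑ i, f i * g i)^2 ≤ (ρ 0 0).re * (ρ 3 3).re := by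
    rw [e00, e33]
    have := Finset.sum_mul_sq_le_sq_mul_sq Finset.univ f g
    refine this.trans_eq ?_
    congr 1
    · exact Finset.sum_congr rfl fun i _ =>
        Real.sq_sqrt (mul_nonneg (hp i) (mul_nonneg (ha00 i) (hb00 i)))
    · exact Finset.sum_congr rfl fun i _ =>
        Real.sq_sqrt (mul_nonneg (hp i) (mul_nonneg (ha11 i) (hb11 i)))
  calc ‖ρ 1 2‖ ^ 2 ≤ (∑ i, f i * g i)^2 := by
        exact pow_le_pow_left₀ (norm_nonneg _) step1 2
    _ ≤ _ := step2


open Matrix in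
lemma my_outer_psd {n : Type*} [Fintype n] [DecidableEq n] (ψ : n → ℂ) :
    (outer ψ).PosSemidef := by
  refine Matrix.PosSemidef.of_dotProduct_mulVec_nonneg ?_ ?_
  · ext i j
    simp [outer, Matrix.conjTranspose_apply, mul_comm]
  · intro x
    have key : dotProduct (star x) ((outer ψ).mulVec x)
        = star (dotProduct (star ψ) x) * (dotProduct (star ψ) x) := by
      simp only [dotProduct, Matrix.mulVec, outer, Matrix.of_apply, Pi.star_apply,
        RCLike.star_def, star_sum, _root_.map_mul, Finset.mul_sum, Finset.sum_mul,
        Complex.conj_conj]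
      rw [Finset.sum_comm]
      refine Finset.sum_congr rfl fun i _ => Finset.sum_congr rfl fun j _ => by ring
    rw [key]
    exact star_mul_self_nonneg _

open Matrix in
lemma my_psd_add {n : Type*} [Fintype n] [DecidableEq n] {M N : Matrix n n ℂ}
    (hM : M.PosSemidef) (hN : N.PosSemidef) : (M + N).PosSemidef := by
  refine Matrix.PosSemidef.of_dotProduct_mulVec_nonneg (hM.1.add hN.1) fun x => ?_
  rw [Matrix.add_mulVec, dotProduct_add]
  exact add_nonneg (hM.dotProduct_mulVec_nonneg x) (hN.dotProduct_mulVec_nonneg x)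

open Matrix in
lemma my_psd_smul {n : Type*} [Fintype n] [DecidableEq n] {M : Matrix n n ℂ}
    (hM : M.PosSemidef) {r : ℝ} (hr : 0 ≤ r) : (r • M).PosSemidef := by
  refine Matrix.PosSemidef.of_dotProduct_mulVec_nonneg ?_ fun x => ?_
  · unfold Matrix.IsHermitian
    rw [Matrix.conjTranspose_smul, hM.1.eq]
    congr 1
  · rw [Matrix.smul_mulVec, dotProduct_smul]
    exact smul_nonneg hr (hM.dotProduct_mulVec_nonneg x)

/-- with ρ = a|00⟩⟨00| + b|01⟩⟨01| + c|10⟩⟨10| + d|11⟩⟨11| (b, c > 0)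
and σ = |(√b|01⟩+√c|10⟩)/√(b+c)⟩⟨·|, for every t > t₀ = (b+c)√(ad/(bc)) the state
ρ' = (ρ+tσ)/(1+t) is entangled, and t₀·C(σ) = 2√(ad). -/
theorem mix_diagonal_sigmaBC (a b c d : ℝ)
    (ha : 0 ≤ a) (hb : 0 < b) (hc : 0 < c) (hd : 0 ≤ d)
    (ha1 : a ≤ 1) (hb1 : b ≤ 1) (hc1 : c ≤ 1) (hd1 : d ≤ 1)
    (hsum : a + b + c + d = 1) :
    (∀ t : ℝ, (b + c) * Real.sqrt (a * d / (b * c)) < t →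
      IsEnt2 ((1 / (1 + t)) •
        ((Matrix.diagonal ![(a : ℂ), (b : ℂ), (c : ℂ), (d : ℂ)]) + t • sigmaBC b c))) ∧
    ((b + c) * Real.sqrt (a * d / (b * c))) * Conc (sigmaBC b c) = 2 * Real.sqrt (a * d) := by
  have hbc : (0:ℝ) < b + c := by linarith
  have hbcm : (0:ℝ) < b * c := mul_pos hb hc
  have ht₀0 : 0 ≤ (b + c) * Real.sqrt (a * d / (b * c)) :=
    mul_nonneg hbc.le (Real.sqrt_nonneg _)
  constructor
  · intro t ht
    have ht0 : 0 < t := lt_of_le_of_lt ht₀0 ht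
    have h1t : (0:ℝ) < 1 + t := by linarith
    refine ⟨⟨?_, ?_⟩, ?_⟩
    · -- PSD
      apply my_psd_smul _ (by positivity)
      apply my_psd_add
      · refine Matrix.PosSemidef.diagonal fun i => ?_
        fin_cases i <;> simp [ha, hb.le, hc.le, hd]
      · exact my_psd_smul (my_outer_psd _) ht0.le
    · -- trace
      rw [Matrix.trace_smul, Matrix.trace_add, Matrix.trace_smul]
      have hDtr : (Matrix.diagonal ![(a : ℂ), (b : ℂ), (c : ℂ), (d : ℂ)]).trace = 1 := by
        rw [Matrix.trace_diagonal]
        simp [Fin.sum_univ_four]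
        norm_cast
      have hσtr : (sigmaBC b c).trace = 1 := by
        rw [my_sig_eq]
        simp [Matrix.trace, Matrix.diag, Fin.sum_univ_four, Matrix.vecHead, Matrix.vecTail]
        norm_cast
        rw [div_mul_div_comm, div_mul_div_comm, Real.mul_self_sqrt hb.le,
          Real.mul_self_sqrt hc.le, Real.mul_self_sqrt hbc.le]
        field_simp
      rw [hDtr, hσtr, Complex.real_smul, Complex.real_smul, mul_one]
      push_cast
      field_simp
    · -- not separable
      intro hsep
      have hbound := my_sep_bound _ hsep
      have hss : Real.sqrt (b+c) * Real.sqrt (b+c) = b + c := Real.mul_self_sqrt hbc.le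
      have hss0 : (0:ℝ) < Real.sqrt (b+c) := Real.sqrt_pos.mpr hbc
      have hσ00 : sigmaBC b c 0 0 = 0 := by rw [my_sig_eq]; rfl
      have hσ33 : sigmaBC b c 3 3 = 0 := by rw [my_sig_eq]; rfl
      have hσ12 : sigmaBC b c 1 2 =
          ((Real.sqrt b / Real.sqrt (b+c) : ℝ):ℂ) * ((Real.sqrt c / Real.sqrt (b+c) : ℝ):ℂ) := by
        rw [my_sig_eq]; rfl
      set p : ℝ := Real.sqrt b / Real.sqrt (b+c) with hp
      set q : ℝ := Real.sqrt c / Real.sqrt (b+c) with hq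
      set ρ' := ((1 / (1 + t)) •
        ((Matrix.diagonal ![(a : ℂ), (b : ℂ), (c : ℂ), (d : ℂ)]) + t • sigmaBC b c)) with hρ'
      have E12 : ρ' 1 2 = ((t * (p * q) / (1 + t) : ℝ) : ℂ) := by
        rw [hρ', Matrix.smul_apply, Matrix.add_apply, Matrix.smul_apply, hσ12,
          Matrix.diagonal_apply_ne _ (by decide), Complex.real_smul, Complex.real_smul]
        push_cast
        ring
      have E00 : ρ' 0 0 = ((a / (1 + t) : ℝ) : ℂ) := by
        rw [hρ', Matrix.smul_apply, Matrix.add_apply, Matrix.smul_apply, hσ00,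
          Matrix.diagonal_apply_eq, Complex.real_smul, Complex.real_smul]
        show (((1:ℝ) / (1 + t) : ℝ):ℂ) * ((a:ℂ) + ↑t * 0) = _
        push_cast
        ring
      have E33 : ρ' 3 3 = ((d / (1 + t) : ℝ) : ℂ) := by
        rw [hρ', Matrix.smul_apply, Matrix.add_apply, Matrix.smul_apply, hσ33,
          Matrix.diagonal_apply_eq, Complex.real_smul, Complex.real_smul]
        show (((1:ℝ) / (1 + t) : ℝ):ℂ) * ((d:ℂ) + ↑t * 0) = _
        push_cast
        ring
      rw [E12, E00, E33, Complex.norm_real, Real.norm_eq_abs, Complex.ofReal_re, Complex.ofReal_re,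
        abs_of_nonneg (by positivity)] at hbound
      have hpq2 : (p * q)^2 = b*c/(b+c)^2 := by
        rw [hp, hq, div_mul_div_comm, div_pow, hss, mul_pow,
          Real.sq_sqrt hb.le, Real.sq_sqrt hc.le]
      have hA : t^2*(b*c) ≤ a*d*(b+c)^2 := by
        rw [div_pow, show a/(1+t)*(d/(1+t)) = a*d/(1+t)^2 from by
          rw [div_mul_div_comm, ← sq]] at hbound
        have hmain : (t*(p*q))^2 ≤ a*d :=
          (div_le_div_iff_of_pos_right (by positivity)).mp hbound
        rw [mul_pow, hpq2, show t^2 * (b*c/(b+c)^2) = t^2*(b*c)/(b+c)^2 from by ring] at hmain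
        exact (div_le_iff₀ (by positivity)).mp hmain
      have ht2 : ((b+c) * Real.sqrt (a*d/(b*c)))^2 < t^2 := by nlinarith
      have hB : a*d*(b+c)^2 < t^2*(b*c) := by
        have he : ((b+c) * Real.sqrt (a*d/(b*c)))^2 = a*d*(b+c)^2/(b*c) := by
          rw [mul_pow, Real.sq_sqrt (by positivity)]
          field_simp
        rw [he] at ht2
        exact (div_lt_iff₀ hbcm).mp ht2
      linarith
  · rw [my_conc_sigmaBC b c hb hc]

    rw [show Real.sqrt (a*d/(b*c)) = Real.sqrt (a*d) / Real.sqrt (b*c) from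
      Real.sqrt_div (by positivity) _]
    rw [Real.sqrt_mul hb.le, ]
    field_simp


end
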